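/- Let M ≥ 2 and let K, β be positive integers with K ≤ M·β. With p = 1 - (1-1/M)^{K-1} and κ = 0.49, the quantity ξ₁ = min{ |(1-p)(1 - (1-1/M)^{-κ})| , |(1-p)(1 - (1-1/M)^{κ})| } satisfies ξ₁ ≥ 0.49 / (M · e^{(Mβ-1)/(M-1)}). -/

import Mathlib

theorem xi_one_lower_bound
    (M K β : ℕ) (hM : 2 ≤ M) (hK : 1 ≤ K) (hβ : 1 ≤ β) (hKMβ : K ≤ M * β)
    (p κ ξ₁ : ℝ)
    (hp : p = 1 - (1 - 1 / (M : ℝ)) ^ (K - 1))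
    (hκ : κ = 0.49)
    (hξ : ξ₁ = min |(1 - p) * (1 - (1 - 1 / (M : ℝ)) ^ (-κ))|
                  |(1 - p) * (1 - (1 - 1 / (M : ℝ)) ^ κ)|) :
    ξ₁ ≥ 0.49 / (M * Real.exp (((M : ℝ) * β - 1) / ((M : ℝ) - 1))) := by
  have hM2 : (2:ℝ) ≤ (M:ℝ) := by exact_mod_cast hM
  have hMpos : (0:ℝ) < (M:ℝ) := by linarith
  set a : ℝ := 1 - 1 / (M : ℝ) with ha
  have hinv : 1 / (M:ℝ) ≤ 1/2 := by
    apply one_div_le_one_div_of_le <;> linarith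
  have hinvpos : 0 < 1 / (M:ℝ) := by positivity
  have ha0 : 0 < a := by rw [ha]; linarith
  have ha1 : a < 1 := by rw [ha]; linarith
  -- Bernoulli : a ^ κ ≤ 1 - κ / M
  have hbern : a ^ κ ≤ 1 - κ * (1 / (M:ℝ)) := by
    have h := rpow_one_add_le_one_add_mul_self (s := -(1 / (M:ℝ))) (p := κ)
      (by linarith) (by rw [hκ]; norm_num) (by rw [hκ]; norm_num)
    have : (1 : ℝ) + -(1 / (M:ℝ)) = a := by rw [ha]; ring
    rw [this] at h
    linarith
  have hx0 : 0 < a ^ κ := Real.rpow_pos_of_pos ha0 κ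
  have hx1 : a ^ κ ≤ 1 := Real.rpow_le_one ha0.le ha1.le (by rw [hκ]; norm_num)
  have hneg : a ^ (-κ) = (a ^ κ)⁻¹ := Real.rpow_neg ha0.le κ
  -- x⁻¹ - 1 ≥ 1 - x for 0 < x ≤ 1
  have hkey : 1 - a ^ κ ≤ (a ^ κ)⁻¹ - 1 := by
    have h1 : (a ^ κ)⁻¹ * (a ^ κ) = 1 := inv_mul_cancel₀ hx0.ne'
    nlinarith [sq_nonneg (a ^ κ - 1), hx0]
  -- 1 - p = a ^ (K-1) > 0
  have h1p : 1 - p = a ^ (K - 1) := by rw [hp]; ring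
  have h1ppos : 0 < a ^ (K - 1) := pow_pos ha0 _
  have hlow : 0.49 / (M:ℝ) ≤ 1 - a ^ κ := by
    rw [hκ] at hbern ⊢
    have h49 : (0.49:ℝ) / (M:ℝ) = 0.49 * (1/(M:ℝ)) := by ring
    rw [h49]; linarith
  -- both terms bounded below by a^(K-1) * (0.49/M)
  have hb2 : a ^ (K - 1) * (0.49 / (M:ℝ)) ≤ |(1 - p) * (1 - a ^ κ)| := by
    rw [h1p, abs_of_nonneg (by nlinarith)]
    apply mul_le_mul_of_nonneg_left hlow h1ppos.le
  have hb1 : a ^ (K - 1) * (0.49 / (M:ℝ)) ≤ |(1 - p) * (1 - a ^ (-κ))| := by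
    rw [h1p, hneg, abs_mul, abs_of_nonneg h1ppos.le]
    apply mul_le_mul_of_nonneg_left _ h1ppos.le
    have : |1 - (a ^ κ)⁻¹| = (a ^ κ)⁻¹ - 1 := by
      rw [abs_sub_comm, abs_of_nonneg]
      have : 1 ≤ (a ^ κ)⁻¹ := one_le_inv_iff₀.mpr ⟨hx0, hx1⟩
      linarith
    rw [this]
    linarith [hlow, hkey]
  -- lower bound for a^(K-1)
  have hexpa : Real.exp (-(1 / ((M:ℝ) - 1))) ≤ a := by
    have h := Real.add_one_le_exp (1 / ((M:ℝ) - 1))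
    have hM1 : (0:ℝ) < (M:ℝ) - 1 := by linarith
    have hE : 0 < Real.exp (1 / ((M:ℝ) - 1)) := Real.exp_pos _
    rw [Real.exp_neg, ha]
    rw [inv_le_iff_one_le_mul₀ hE]
    have key : (1 - 1/(M:ℝ)) * (1/((M:ℝ)-1) + 1) = 1 := by
      field_simp
      ring
    have ha' : (0:ℝ) ≤ 1 - 1/(M:ℝ) := ha0.le
    nlinarith [mul_le_mul_of_nonneg_left h ha']
  have hMβ1 : 1 ≤ M * β := le_trans hK hKMβ
  have hpowle : a ^ (M * β - 1) ≤ a ^ (K - 1) :=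
    pow_le_pow_of_le_one ha0.le ha1.le (by omega)
  have hcast : ((M * β - 1 : ℕ) : ℝ) = (M:ℝ) * β - 1 := by
    push_cast [Nat.cast_sub hMβ1]; ring
  have hexppow : Real.exp (-(((M:ℝ) * β - 1) / ((M:ℝ) - 1))) ≤ a ^ (M * β - 1) := by
    have h := pow_le_pow_left₀ (Real.exp_pos _).le hexpa (M * β - 1)
    rw [← Real.exp_nat_mul] at h
    calc Real.exp (-(((M:ℝ) * β - 1) / ((M:ℝ) - 1)))
        = Real.exp ((M * β - 1 : ℕ) * -(1 / ((M:ℝ) - 1))) := by rw [hcast]; ring_nf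
      _ ≤ a ^ (M * β - 1) := h
  have hfinal : Real.exp (-(((M:ℝ) * β - 1) / ((M:ℝ) - 1))) * (0.49 / (M:ℝ)) ≤
      a ^ (K - 1) * (0.49 / (M:ℝ)) := by
    apply mul_le_mul_of_nonneg_right (le_trans hexppow hpowle) (by positivity)
  have hrhs : 0.49 / ((M:ℝ) * Real.exp (((M:ℝ) * β - 1) / ((M:ℝ) - 1))) =
      Real.exp (-(((M:ℝ) * β - 1) / ((M:ℝ) - 1))) * (0.49 / (M:ℝ)) := by
    rw [Real.exp_neg]
    field_simp
  rw [hξ, ge_iff_le, le_min_iff, hrhs]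
  exact ⟨le_trans hfinal hb1, le_trans hfinal hb2⟩
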